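/- Let G be a group with a choice of generators w ↦ w̄ from W whose gross cogrowth satisfies θ < 1 (i.e., G is non-amenable). Then for every ε > 0 and every constant K ∈ ℝ, the set U = { w ∈ W : |w̄| > ((1−θ)/θ − ε)·|w| + K } is exponentially generic. -/

import Mathlib

open Filter

namespace GenericSubgroups

/-- A word over the alphabet `Fin m × Bool` (generator index, with `true` = formal inverse). -/
abbrev Word (m : ℕ) := List (Fin m × Bool)

/-- The disk of radius `n` : words of length at most `n`. -/
def ball (m n : ℕ) : Set (Word m) := {w | w.length ≤ n}

/-- The sphere of radius `n` : words of length exactly `n`. -/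
def sphere (m n : ℕ) : Set (Word m) := {w | w.length = n}

/-- A set of words is exponentially negligible. -/
def ExpNegligible {m : ℕ} (X : Set (Word m)) : Prop :=
  ∃ α : ℝ, 0 < α ∧ α < 1 ∧
    ∀ᶠ n in atTop, ((X ∩ ball m n).ncard : ℝ) / ((ball m n).ncard : ℝ) ≤ α ^ n

/-- A set of words is exponentially generic if its complement is exponentially negligible. -/
def ExpGeneric {m : ℕ} (X : Set (Word m)) : Prop := ExpNegligible Xᶜ

/-- Disk of radius `n` in the set of `k`-tuples of words. -/
def ballK (m k n : ℕ) : Set (Fin k → Word m) := {w | ∀ i, (w i).length ≤ n}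

def ExpNegligibleK {m k : ℕ} (X : Set (Fin k → Word m)) : Prop :=
  ∃ α : ℝ, 0 < α ∧ α < 1 ∧
    ∀ᶠ n in atTop, ((X ∩ ballK m k n).ncard : ℝ) / ((ballK m k n).ncard : ℝ) ≤ α ^ n

def ExpGenericK {m k : ℕ} (X : Set (Fin k → Word m)) : Prop := ExpNegligibleK Xᶜ

variable {G : Type*} [Group G]

/-- Evaluation of a word in `G`, determined by the family `g` of generators. -/
def eval {m : ℕ} (g : Fin m → G) (w : Word m) : G :=
  (w.map (fun p => if p.2 then (g p.1)⁻¹ else g p.1)).prod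

/-- Word length of an element of `G`. -/
noncomputable def wlen {m : ℕ} (g : Fin m → G) (x : G) : ℕ :=
  sInf {n | ∃ w : Word m, w.length = n ∧ eval g w = x}

/-- Word metric on `G`. -/
noncomputable def wdist {m : ℕ} (g : Fin m → G) (x y : G) : ℕ := wlen g (x⁻¹ * y)

/-- Words of length exactly `n` representing the identity. -/
def V {m : ℕ} (g : Fin m → G) (n : ℕ) : Set (Word m) :=
  {w | w.length = n ∧ eval g w = 1}

/-- The gross cogrowth `θ = limsup (1/n) log_{2m} |V_n|`. -/
noncomputable def cogrowth {m : ℕ} (g : Fin m → G) : ℝ :=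
  limsup (fun n : ℕ => Real.logb (2 * m : ℝ) ((V g n).ncard : ℝ) / (n : ℝ)) atTop

/-- The four-point (quadrilateral) condition with constant `δ` for the word metric. -/
def FourPoint {m : ℕ} (g : Fin m → G) (δ : ℝ) : Prop :=
  ∀ p q r s : G,
    (wdist g p s : ℝ) + (wdist g q r : ℝ) ≤
      2 * δ + max ((wdist g p q : ℝ) + (wdist g r s : ℝ)) ((wdist g p r : ℝ) + (wdist g q s : ℝ))

/-- The Gromov product `(x|y)_1` with respect to the word metric. -/
noncomputable def gp {m : ℕ} (g : Fin m → G) (x y : G) : ℝ :=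
  ((wlen g x : ℝ) + (wlen g y : ℝ) - (wlen g (x⁻¹ * y) : ℝ)) / 2

/-- `x^e` where `e : Bool`, `true` meaning inverse. -/
def powB (x : G) (e : Bool) : G := if e then x⁻¹ else x

/-- Formal inverse of a word. -/
def winv {m : ℕ} (w : Word m) : Word m := (w.reverse).map (fun p => (p.1, !p.2))




lemma ncard_biUnion_le' {α ι : Type*} [DecidableEq ι] (s : Finset ι) (t : ι → Set α) :
    (⋃ i ∈ s, t i).ncard ≤ ∑ i ∈ s, (t i).ncard := by
  induction s using Finset.induction with
  | empty => simp
  | insert _ _ h ih =>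
      rw [Finset.set_biUnion_insert, Finset.sum_insert h]
      exact le_trans (Set.ncard_union_le _ _) (by omega)

lemma eval_append {m : ℕ} (g : Fin m → G) (w u : Word m) :
    eval g (w ++ u) = eval g w * eval g u := by
  simp [eval]

lemma winv_length {m : ℕ} (w : Word m) : (winv w).length = w.length := by simp [winv]

lemma eval_winv {m : ℕ} (g : Fin m → G) (w : Word m) :
    eval g (winv w) = (eval g w)⁻¹ := by
  induction w with
  | nil => simp [eval, winv]
  | cons p t ih =>
      have h1 : winv (p :: t) = winv t ++ [(p.1, !p.2)] := by simp [winv]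
      rw [h1, eval_append, ih]
      have h2 : eval g (p :: t) = (if p.2 then (g p.1)⁻¹ else g p.1) * eval g t := by
        simp [eval]
      rw [h2, mul_inv_rev]
      congr 1
      cases p.2 <;> simp [eval]

lemma sphere_ncard (m n : ℕ) : (sphere m n).ncard = (2 * m) ^ n := by
  have e : ↥(sphere m n) ≃ List.Vector (Fin m × Bool) n :=
    Equiv.subtypeEquivRight (fun _ => Iff.rfl)
  rw [← Nat.card_coe_set_eq, Nat.card_congr e, Nat.card_eq_fintype_card, card_vector]
  simp [mul_comm]

lemma sphere_finite (m n : ℕ) : (sphere m n).Finite := List.finite_length_eq _ n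
lemma ball_finite (m n : ℕ) : (ball m n).Finite := List.finite_length_le _ n

lemma ball_ncard_ge (m n : ℕ) : (2 * m) ^ n ≤ (ball m n).ncard := by
  rw [← sphere_ncard m n]
  exact Set.ncard_le_ncard (fun w hw => le_of_eq hw) (ball_finite m n)

lemma wlen_le_length {m : ℕ} (g : Fin m → G) (w : Word m) :
    wlen g (eval g w) ≤ w.length := Nat.sInf_le ⟨w, rfl, rfl⟩

lemma exists_geodesic {m : ℕ} (g : Fin m → G) (hsurj : Function.Surjective (eval g)) (x : G) :
    ∃ u : Word m, u.length = wlen g x ∧ eval g u = x := by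
  have hne : {n | ∃ w : Word m, w.length = n ∧ eval g w = x}.Nonempty := by
    obtain ⟨w, hw⟩ := hsurj x
    exact ⟨w.length, w, rfl, hw⟩
  exact Nat.sInf_mem hne

lemma V_ncard_le (m : ℕ) (g : Fin m → G) (n : ℕ) : (V g n).ncard ≤ (2 * m) ^ n := by
  rw [← sphere_ncard m n]
  exact Set.ncard_le_ncard (fun w hw => hw.1) (sphere_finite m n)

lemma V_finite (m : ℕ) (g : Fin m → G) (n : ℕ) : (V g n).Finite :=
  (sphere_finite m n).subset (fun w hw => hw.1)

def Sset {m : ℕ} (g : Fin m → G) (k ℓ : ℕ) : Set (Word m) :=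
  {w | w.length = k ∧ wlen g (eval g w) = ℓ}

lemma Sset_ncard_le {m : ℕ} (g : Fin m → G) (hsurj : Function.Surjective (eval g)) (k ℓ : ℕ) :
    (Sset g k ℓ).ncard ≤ (V g (k + ℓ)).ncard := by
  choose geo hlen hev using exists_geodesic g hsurj
  refine Set.ncard_le_ncard_of_injOn (fun w => w ++ winv (geo (eval g w))) ?_ ?_
    (V_finite m g (k + ℓ))
  · intro w hw
    refine ⟨?_, ?_⟩
    · simp only [List.length_append, winv_length, hlen, hw.1, hw.2]
    · rw [eval_append, eval_winv, hev, mul_inv_cancel]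
  · intro w1 h1 w2 h2 he
    have e1 : (w1 ++ winv (geo (eval g w1))).take k = w1 := by
      rw [← h1.1]; exact List.take_left
    have e2 : (w2 ++ winv (geo (eval g w2))).take k = w2 := by
      rw [← h2.1]; exact List.take_left
    rw [← e1, ← e2]
    simp only at he
    rw [he]


set_option maxHeartbeats 1000000 in
/-- Lemma `amenable`: if `G` is non-amenable (`θ < 1`), then for every
`ε > 0` and constant `K`, the set `U = {w : |w̄| > ((1-θ)/θ - ε)|w| + K}` is
exponentially generic. -/
theorem generic_word_length_lower_bound (m : ℕ) (hm : 2 ≤ m) {G : Type*} [Group G]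
    (g : Fin m → G) (hsurj : Function.Surjective (eval g))
    (hθ : cogrowth g < 1) (ε K : ℝ) (hε : 0 < ε) :
    ExpGeneric {w : Word m |
      ((1 - cogrowth g) / cogrowth g - ε) * (w.length : ℝ) + K < (wlen g (eval g w) : ℝ)} := by
  classical
  set θ := cogrowth g with hθdef
  set s : ℝ := (1 - θ) / θ - ε with hs
  set b : ℝ := 2 * (m : ℝ) with hbdef
  clear_value θ s b
  have hm2 : (2 : ℝ) ≤ (m : ℝ) := by exact_mod_cast hm
  have hb1 : (1 : ℝ) < b := by rw [hbdef]; nlinarith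
  have hb0 : (0 : ℝ) < b := lt_trans one_pos hb1
  -- sign analysis for s
  have hθpos_of_s : 0 < s → 0 < θ := by
    intro hspos
    by_contra hle
    push_neg at hle
    rcases hle.lt_or_eq with hlt | heq
    · have h1 : (1 - θ) / θ < 0 := div_neg_of_pos_of_neg (by linarith) hlt
      have : s < 0 := by rw [hs]; linarith
      linarith
    · have : s = -ε := by rw [hs, heq, div_zero]; ring
      linarith
  set c : ℝ := 1 + max s 0 with hc
  clear_value c
  have hc1 : (1 : ℝ) ≤ c := by
    have := le_max_right s 0; rw [hc]; linarith
  have hc0 : (0 : ℝ) < c := lt_of_lt_of_le one_pos hc1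
  have hmc : max θ 0 * c < 1 := by
    rcases le_or_gt s 0 with hs0 | hs0
    · have hceq : c = 1 := by rw [hc, max_eq_right hs0, add_zero]
      rw [hceq, mul_one]
      exact max_lt hθ one_pos
    · have hθ0 : 0 < θ := hθpos_of_s hs0
      have hmax : max θ 0 = θ := max_eq_left hθ0.le
      have hcs : c = 1 + s := by rw [hc, max_eq_left hs0.le]
      have hdiv : θ * ((1 - θ) / θ) = 1 - θ := mul_div_cancel₀ _ hθ0.ne'
      rw [hmax, hcs, hs]
      have hexp : θ * (1 + ((1 - θ) / θ - ε)) = θ + (1 - θ) - θ * ε := by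
        rw [mul_add, mul_sub, hdiv]; ring
      rw [hexp]; nlinarith
  set θ' : ℝ := (max θ 0 + 1 / c) / 2 with hθ'def
  clear_value θ'
  have hinvc : max θ 0 < 1 / c := (lt_div_iff₀ hc0).mpr hmc
  have hθ'pos : 0 < θ' := by
    have h1 : 0 ≤ max θ 0 := le_max_right θ 0
    have h2 : 0 < 1 / c := by positivity
    rw [hθ'def]; linarith
  have hθθ' : θ < θ' := by
    have h1 : θ ≤ max θ 0 := le_max_left θ 0
    rw [hθ'def]; linarith
  have hθ'c : θ' * c < 1 := by
    have h1 : (1 / c) * c = 1 := one_div_mul_cancel hc0.ne'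
    have h2 : θ' * c = (max θ 0 * c + (1 / c) * c) / 2 := by rw [hθ'def]; ring
    rw [h2, h1]; linarith
  -- bound the limsup sequence
  have hone_le_rpow : ∀ x : ℝ, 0 ≤ x → 1 ≤ b ^ x := by
    intro x hx
    calc (1 : ℝ) = b ^ (0 : ℝ) := (Real.rpow_zero b).symm
      _ ≤ b ^ x := Real.rpow_le_rpow_of_exponent_le hb1.le hx
  have hVnat : ∀ j : ℕ, ((V g j).ncard : ℝ) ≤ b ^ (j : ℝ) := by
    intro j
    calc ((V g j).ncard : ℝ) ≤ (((2 * m) ^ j : ℕ) : ℝ) := by exact_mod_cast V_ncard_le m g j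
      _ = b ^ (j : ℝ) := by rw [Real.rpow_natCast, hbdef]; push_cast; ring
  have hbound : ∀ n : ℕ, Real.logb b ((V g n).ncard : ℝ) / (n : ℝ) ≤ 1 := by
    intro n
    rcases Nat.eq_zero_or_pos n with h0 | hn
    · simp [h0]
    · have hnpos : (0 : ℝ) < (n : ℝ) := by exact_mod_cast hn
      rw [div_le_one hnpos]
      rcases Nat.eq_zero_or_pos (V g n).ncard with hv | hv
      · rw [hv]; simp [Real.logb]
      · have hvpos : (0 : ℝ) < ((V g n).ncard : ℝ) := by exact_mod_cast hv
        rw [Real.logb_le_iff_le_rpow hb1 hvpos]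
        exact hVnat n
  have hls : limsup (fun n : ℕ => Real.logb b ((V g n).ncard : ℝ) / (n : ℝ)) atTop < θ' := by
    have heq : limsup (fun n : ℕ => Real.logb b ((V g n).ncard : ℝ) / (n : ℝ)) atTop = θ := by
      rw [hθdef, cogrowth, hbdef]
    rw [heq]; exact hθθ'
  have hev : ∀ᶠ n in atTop, Real.logb b ((V g n).ncard : ℝ) / (n : ℝ) < θ' :=
    eventually_lt_of_limsup_lt hls (isBoundedUnder_of ⟨1, hbound⟩)
  obtain ⟨N₀, hN₀⟩ := eventually_atTop.mp hev
  set N₁ : ℕ := max N₀ 1 with hN₁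
  have h1N : 1 ≤ N₁ := by rw [hN₁]; exact le_max_right _ _
  have hN₀N : N₀ ≤ N₁ := by rw [hN₁]; exact le_max_left _ _
  clear_value N₁
  set C : ℝ := b ^ (N₁ : ℝ) with hCdef
  have hC0 : 0 < C := by rw [hCdef]; exact Real.rpow_pos_of_pos hb0 _
  have hC1 : 1 ≤ C := by rw [hCdef]; exact hone_le_rpow _ (Nat.cast_nonneg _)
  clear_value C
  have hB : ∀ j : ℕ, ((V g j).ncard : ℝ) ≤ C * b ^ (θ' * (j : ℝ)) := by
    intro j
    have hrpos : (0 : ℝ) < b ^ (θ' * (j : ℝ)) := Real.rpow_pos_of_pos hb0 _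
    rcases le_or_gt N₁ j with hj | hj
    · have hj1 : 1 ≤ j := le_trans h1N hj
      have hjpos : (0 : ℝ) < (j : ℝ) := by exact_mod_cast hj1
      have hu := hN₀ j (le_trans hN₀N hj)
      rcases Nat.eq_zero_or_pos (V g j).ncard with hv | hv
      · rw [hv]; push_cast; positivity
      · have hvpos : (0 : ℝ) < ((V g j).ncard : ℝ) := by exact_mod_cast hv
        have hlb : Real.logb b ((V g j).ncard : ℝ) ≤ θ' * (j : ℝ) := by
          rw [div_lt_iff₀ hjpos] at hu; linarith
        have h1 := (Real.logb_le_iff_le_rpow hb1 hvpos).mp hlb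
        calc ((V g j).ncard : ℝ) ≤ b ^ (θ' * (j : ℝ)) := h1
          _ ≤ C * b ^ (θ' * (j : ℝ)) := le_mul_of_one_le_left hrpos.le hC1
    · calc ((V g j).ncard : ℝ) ≤ b ^ (j : ℝ) := hVnat j
        _ ≤ b ^ (N₁ : ℝ) := Real.rpow_le_rpow_of_exponent_le hb1.le (by exact_mod_cast hj.le)
        _ = C * 1 := by rw [hCdef, mul_one]
        _ ≤ C * b ^ (θ' * (j : ℝ)) := by
            refine mul_le_mul_of_nonneg_left ?_ hC0.le
            exact hone_le_rpow _ (mul_nonneg hθ'pos.le (Nat.cast_nonneg j))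
  -- the complement set and its covering
  set L : ℕ → ℕ := fun n => ⌊max s 0 * (n : ℝ) + |K|⌋₊ with hL
  have hLle : ∀ n : ℕ, ((L n : ℝ)) ≤ max s 0 * (n : ℝ) + |K| := by
    intro n
    simp only [hL]
    apply Nat.floor_le
    have h1 : 0 ≤ max s 0 := le_max_right s 0
    positivity
  set Y : Set (Word m) := {w : Word m | (wlen g (eval g w) : ℝ) ≤ s * (w.length : ℝ) + K}
    with hY
  have hcompl : {w : Word m | s * (w.length : ℝ) + K < (wlen g (eval g w) : ℝ)}ᶜ = Y := by
    ext w
    simp only [hY, Set.mem_compl_iff, Set.mem_setOf_eq, not_lt]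
  have hYsub : ∀ n : ℕ, Y ∩ ball m n ⊆
      ⋃ p ∈ Finset.range (n + 1) ×ˢ Finset.range (L n + 1), Sset g p.1 p.2 := by
    intro n w hw
    obtain ⟨hwY0, hwb⟩ := hw
    rw [hY] at hwY0
    have hwY : (wlen g (eval g w) : ℝ) ≤ s * (w.length : ℝ) + K := hwY0
    have hk : w.length ≤ n := hwb
    have hkr : ((w.length : ℝ)) ≤ (n : ℝ) := by exact_mod_cast hk
    have hℓ : wlen g (eval g w) ≤ L n := by
      simp only [hL]
      apply Nat.le_floor
      have h1 : (wlen g (eval g w) : ℝ) ≤ s * (w.length : ℝ) + K := hwY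
      have h2 : s * (w.length : ℝ) ≤ max s 0 * (n : ℝ) := by
        calc s * (w.length : ℝ) ≤ max s 0 * (w.length : ℝ) :=
              mul_le_mul_of_nonneg_right (le_max_left _ _) (Nat.cast_nonneg _)
          _ ≤ max s 0 * (n : ℝ) :=
              mul_le_mul_of_nonneg_left hkr (le_max_right _ _)
      have h3 : K ≤ |K| := le_abs_self K
      linarith
    have hmem : (w.length, wlen g (eval g w)) ∈
        Finset.range (n + 1) ×ˢ Finset.range (L n + 1) := by
      rw [Finset.mem_product, Finset.mem_range, Finset.mem_range]
      exact ⟨Nat.lt_succ_of_le hk, Nat.lt_succ_of_le hℓ⟩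
    exact Set.mem_biUnion hmem ⟨rfl, rfl⟩
  -- counting bound
  have hcount : ∀ n : ℕ, ((Y ∩ ball m n).ncard : ℝ) ≤
      ((n : ℝ) + 1) * ((L n : ℝ) + 1) * (C * b ^ (θ' * ((n : ℝ) + (L n : ℝ)))) := by
    intro n
    set P := Finset.range (n + 1) ×ˢ Finset.range (L n + 1) with hP
    have hfin : ∀ p : ℕ × ℕ, (Sset g p.1 p.2 : Set (Word m)).Finite := fun p =>
      (sphere_finite m p.1).subset (fun w hw => hw.1)
    have hUfin : (⋃ p ∈ P, Sset g (Prod.fst p) p.2).Finite :=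
      Set.Finite.biUnion (Finset.finite_toSet _) (fun p _ => hfin p)
    have h1 : (Y ∩ ball m n).ncard ≤ ∑ p ∈ P, (Sset g p.1 p.2).ncard :=
      le_trans (Set.ncard_le_ncard (hYsub n) hUfin) (ncard_biUnion_le' _ _)
    have h2 : ((Y ∩ ball m n).ncard : ℝ) ≤ ∑ p ∈ P, ((Sset g p.1 p.2).ncard : ℝ) := by
      exact_mod_cast h1
    have h3 : ∀ p ∈ P, ((Sset g p.1 p.2).ncard : ℝ) ≤ C * b ^ (θ' * ((n : ℝ) + (L n : ℝ))) := by
      intro p hp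
      rw [hP, Finset.mem_product, Finset.mem_range, Finset.mem_range] at hp
      have hp1 : (p.1 : ℝ) ≤ (n : ℝ) := by exact_mod_cast Nat.lt_succ_iff.mp hp.1
      have hp2 : (p.2 : ℝ) ≤ (L n : ℝ) := by exact_mod_cast Nat.lt_succ_iff.mp hp.2
      calc ((Sset g p.1 p.2).ncard : ℝ) ≤ ((V g (p.1 + p.2)).ncard : ℝ) := by
            exact_mod_cast Sset_ncard_le g hsurj p.1 p.2
        _ ≤ C * b ^ (θ' * ((p.1 + p.2 : ℕ) : ℝ)) := hB _
        _ ≤ C * b ^ (θ' * ((n : ℝ) + (L n : ℝ))) := by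
            refine mul_le_mul_of_nonneg_left ?_ hC0.le
            apply Real.rpow_le_rpow_of_exponent_le hb1.le
            apply mul_le_mul_of_nonneg_left _ hθ'pos.le
            push_cast
            linarith
    calc ((Y ∩ ball m n).ncard : ℝ) ≤ ∑ p ∈ P, ((Sset g p.1 p.2).ncard : ℝ) := h2
      _ ≤ ∑ _p ∈ P, C * b ^ (θ' * ((n : ℝ) + (L n : ℝ))) := Finset.sum_le_sum h3
      _ = (P.card : ℝ) * (C * b ^ (θ' * ((n : ℝ) + (L n : ℝ)))) := by
          rw [Finset.sum_const, nsmul_eq_mul]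
      _ = ((n : ℝ) + 1) * ((L n : ℝ) + 1) * (C * b ^ (θ' * ((n : ℝ) + (L n : ℝ)))) := by
          rw [hP, Finset.card_product, Finset.card_range, Finset.card_range]
          push_cast; ring
  -- set up α
  set γ : ℝ := b ^ (θ' * c - 1) with hγdef
  have hγ0 : 0 < γ := by rw [hγdef]; exact Real.rpow_pos_of_pos hb0 _
  have hγ1 : γ < 1 := by rw [hγdef]; exact Real.rpow_lt_one_of_one_lt_of_neg hb1 (by linarith)
  clear_value γ
  set α : ℝ := Real.sqrt γ with hαdef
  have hα0 : 0 < α := by rw [hαdef]; exact Real.sqrt_pos.mpr hγ0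
  have hα1 : α < 1 := by
    rw [hαdef]
    have h := Real.sqrt_lt_sqrt hγ0.le hγ1
    rwa [Real.sqrt_one] at h
  have hαsq : α * α = γ := by rw [hαdef]; exact Real.mul_self_sqrt hγ0.le
  clear_value α
  set D' : ℝ := b ^ (θ' * |K|) with hD'def
  have hD'0 : 0 < D' := by rw [hD'def]; exact Real.rpow_pos_of_pos hb0 _
  set M : ℝ := max s 0 + |K| + 1 with hM
  have hM1 : 1 ≤ M := by
    have h1 : 0 ≤ max s 0 := le_max_right s 0
    have h2 : 0 ≤ |K| := abs_nonneg K
    rw [hM]; linarith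
  -- per-n ratio bound
  have hratio : ∀ n : ℕ, ((Y ∩ ball m n).ncard : ℝ) / ((ball m n).ncard : ℝ) ≤
      (C * D' * M) * (((n : ℝ) + 1) * ((n : ℝ) + 1)) * (α ^ n * α ^ n) := by
    intro n
    have hballge : b ^ (n : ℝ) ≤ ((ball m n).ncard : ℝ) := by
      calc b ^ (n : ℝ) = (((2 * m) ^ n : ℕ) : ℝ) := by
            rw [Real.rpow_natCast, hbdef]; push_cast; ring
        _ ≤ ((ball m n).ncard : ℝ) := by exact_mod_cast ball_ncard_ge m n
    have hbnpos : (0 : ℝ) < b ^ (n : ℝ) := Real.rpow_pos_of_pos hb0 _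
    have hA0 : (0 : ℝ) ≤ ((Y ∩ ball m n).ncard : ℝ) := Nat.cast_nonneg _
    have step1 : ((Y ∩ ball m n).ncard : ℝ) / ((ball m n).ncard : ℝ) ≤
        ((Y ∩ ball m n).ncard : ℝ) / b ^ (n : ℝ) := by
      gcongr
    have step2 : ((Y ∩ ball m n).ncard : ℝ) / b ^ (n : ℝ) ≤
        ((n : ℝ) + 1) * ((L n : ℝ) + 1) * (C * b ^ (θ' * ((n : ℝ) + (L n : ℝ)) - (n : ℝ))) := by
      rw [div_le_iff₀ hbnpos]
      calc ((Y ∩ ball m n).ncard : ℝ) ≤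
          ((n : ℝ) + 1) * ((L n : ℝ) + 1) * (C * b ^ (θ' * ((n : ℝ) + (L n : ℝ)))) := hcount n
        _ = ((n : ℝ) + 1) * ((L n : ℝ) + 1) *
            (C * b ^ (θ' * ((n : ℝ) + (L n : ℝ)) - (n : ℝ))) * b ^ (n : ℝ) := by
            rw [Real.rpow_sub hb0]; field_simp
    have step3 : b ^ (θ' * ((n : ℝ) + (L n : ℝ)) - (n : ℝ)) ≤ γ ^ n * D' := by
      have hexp : θ' * ((n : ℝ) + (L n : ℝ)) - (n : ℝ) ≤ (θ' * c - 1) * n + θ' * |K| := by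
        have h1 := hLle n
        have h2 : θ' * ((n : ℝ) + (L n : ℝ)) ≤ θ' * ((n : ℝ) + max s 0 * (n : ℝ) + |K|) := by
          apply mul_le_mul_of_nonneg_left _ hθ'pos.le
          linarith
        have h3 : θ' * ((n : ℝ) + max s 0 * (n : ℝ) + |K|) = θ' * c * n + θ' * |K| := by
          rw [hc]; ring
        linarith
      calc b ^ (θ' * ((n : ℝ) + (L n : ℝ)) - (n : ℝ)) ≤ b ^ ((θ' * c - 1) * n + θ' * |K|) :=
            Real.rpow_le_rpow_of_exponent_le hb1.le hexp
        _ = γ ^ n * D' := by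
            rw [Real.rpow_add hb0, hγdef, hD'def, ← Real.rpow_natCast (b ^ (θ' * c - 1)) n,
              ← Real.rpow_mul hb0.le]
    have hLn1 : (L n : ℝ) + 1 ≤ M * ((n : ℝ) + 1) := by
      have h1 := hLle n
      have h2 : 0 ≤ max s 0 := le_max_right s 0
      have h3 : 0 ≤ |K| := abs_nonneg K
      have h4 : (0:ℝ) ≤ (n : ℝ) := Nat.cast_nonneg n
      have hexp : M * ((n : ℝ) + 1) =
          max s 0 * (n : ℝ) + |K| * (n : ℝ) + (n : ℝ) + max s 0 + |K| + 1 := by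
        rw [hM]; ring
      have h5 : (0:ℝ) ≤ max s 0 * (n : ℝ) := mul_nonneg h2 h4
      have h6 : (0:ℝ) ≤ |K| * (n : ℝ) := mul_nonneg h3 h4
      linarith
    calc ((Y ∩ ball m n).ncard : ℝ) / ((ball m n).ncard : ℝ)
        ≤ ((n : ℝ) + 1) * ((L n : ℝ) + 1) * (C * b ^ (θ' * ((n : ℝ) + (L n : ℝ)) - (n : ℝ))) :=
          le_trans step1 step2
      _ ≤ ((n : ℝ) + 1) * (M * ((n : ℝ) + 1)) * (C * (γ ^ n * D')) := by
          have h5 : (0:ℝ) ≤ (n : ℝ) + 1 := by positivity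
          apply mul_le_mul
          · apply mul_le_mul_of_nonneg_left hLn1 h5
          · exact mul_le_mul_of_nonneg_left step3 hC0.le
          · positivity
          · positivity
      _ = (C * D' * M) * (((n : ℝ) + 1) * ((n : ℝ) + 1)) * (α ^ n * α ^ n) := by
          rw [← hαsq, mul_pow]; ring
  -- eventual smallness of the polynomial factor
  have hsummable : Summable (fun n : ℕ => ((n : ℝ)) ^ 2 * α ^ n) :=
    summable_pow_mul_geometric_of_norm_lt_one 2
      (by rw [Real.norm_eq_abs, abs_of_pos hα0]; exact hα1)
  have htend0 : Tendsto (fun n : ℕ => ((n : ℝ)) ^ 2 * α ^ n) atTop (nhds 0) :=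
    hsummable.tendsto_atTop_zero
  have htend1 : Tendsto (fun n : ℕ => (((n + 1 : ℕ) : ℝ)) ^ 2 * α ^ (n + 1)) atTop (nhds 0) :=
    htend0.comp (tendsto_add_atTop_nat 1)
  have htend2 : Tendsto
      (fun n : ℕ => (C * D' * M / α) * ((((n + 1 : ℕ) : ℝ)) ^ 2 * α ^ (n + 1)))
      atTop (nhds 0) := by
    have := htend1.const_mul (C * D' * M / α)
    simpa using this
  have heventual : ∀ᶠ n : ℕ in atTop,
      (C * D' * M) * (((n : ℝ) + 1) * ((n : ℝ) + 1)) * α ^ n ≤ 1 := by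
    have hlt := htend2.eventually_lt_const one_pos
    filter_upwards [hlt] with n hn
    have heq : (C * D' * M / α) * ((((n + 1 : ℕ) : ℝ)) ^ 2 * α ^ (n + 1)) =
        (C * D' * M) * (((n : ℝ) + 1) * ((n : ℝ) + 1)) * α ^ n := by
      push_cast
      field_simp [hα0.ne']
      ring
    rw [heq] at hn
    exact hn.le
  -- conclude
  show ExpNegligible _
  rw [hcompl]
  refine ⟨α, hα0, hα1, ?_⟩
  filter_upwards [heventual] with n hn
  calc ((Y ∩ ball m n).ncard : ℝ) / ((ball m n).ncard : ℝ)
      ≤ (C * D' * M) * (((n : ℝ) + 1) * ((n : ℝ) + 1)) * (α ^ n * α ^ n) := hratio n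
    _ = ((C * D' * M) * (((n : ℝ) + 1) * ((n : ℝ) + 1)) * α ^ n) * α ^ n := by ring
    _ ≤ 1 * α ^ n := mul_le_mul_of_nonneg_right hn (by positivity)
    _ = α ^ n := one_mul _


end GenericSubgroups
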